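/- For every even n ≥ 3, the prism graph Cₙ □ K₂ (the Cartesian product of the n-cycle with a single edge) has an involutive automorphism with no fixed edges, and hence is P2-win in Trail Trap. -/

import Mathlib

open SimpleGraph

/-- A valid partial play of Trail Trap: a list of moves (directed edges), where each
move is along an edge of `G`, no edge (as an unordered pair) is used twice, and each
player's moves form a trail (move `i+2` starts where move `i` ended). Moves at even
indices belong to Player 1 and moves at odd indices to Player 2. -/
def ValidPlay {V : Type*} (G : SimpleGraph V) (l : List (V × V)) : Prop :=
  (∀ m ∈ l, G.Adj m.1 m.2) ∧
  (l.map (fun m => s(m.1, m.2))).Nodup ∧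
  ∀ (i : ℕ) (h : i + 2 < l.length),
    (l.get ⟨i + 2, h⟩).1 = (l.get ⟨i, by omega⟩).2

/-- The play `l` follows strategy `σ` on all turns with index `≡ t (mod 2)`. -/
def FollowsAt {V : Type*} (σ : List (V × V) → V × V) (t : ℕ) (l : List (V × V)) : Prop :=
  ∀ (i : ℕ) (h : i < l.length), i % 2 = t → l.get ⟨i, h⟩ = σ (l.take i)

/-- Player 1 has a winning strategy in Trail Trap on `G`: a strategy `σ` for the
even-indexed moves such that every `σ`-consistent valid play that cannot be
`σ`-consistently extended has odd length (i.e. Player 2 is the one stuck). -/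
def P1Win {V : Type*} (G : SimpleGraph V) : Prop :=
  ∃ σ : List (V × V) → V × V, ∀ l : List (V × V),
    ValidPlay G l → FollowsAt σ 0 l →
    (∀ m : V × V, ¬ (ValidPlay G (l ++ [m]) ∧ FollowsAt σ 0 (l ++ [m]))) →
    l.length % 2 = 1

/-- Player 2 has a winning strategy in Trail Trap on `G`. -/
def P2Win {V : Type*} (G : SimpleGraph V) : Prop :=
  ∃ σ : List (V × V) → V × V, ∀ l : List (V × V),
    ValidPlay G l → FollowsAt σ 1 l →
    (∀ m : V × V, ¬ (ValidPlay G (l ++ [m]) ∧ FollowsAt σ 1 (l ++ [m]))) →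
    l.length % 2 = 0

/-- Player 1 has a winning strategy in Trail Trap on `G` whose first move is `u → v`. -/
def P1WinFrom {V : Type*} (G : SimpleGraph V) (u v : V) : Prop :=
  ∃ σ : List (V × V) → V × V, σ [] = (u, v) ∧ ∀ l : List (V × V),
    ValidPlay G l → FollowsAt σ 0 l →
    (∀ m : V × V, ¬ (ValidPlay G (l ++ [m]) ∧ FollowsAt σ 0 (l ++ [m]))) →
    l.length % 2 = 1

/-- Player 2 has a winning strategy in Trail Trap on `G`, given that Player 1's first
move was `u → v`. -/
def P2WinAfter {V : Type*} (G : SimpleGraph V) (u v : V) : Prop :=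
  ∃ σ : List (V × V) → V × V, ∀ l : List (V × V),
    l.head? = some (u, v) → ValidPlay G l → FollowsAt σ 1 l →
    (∀ m : V × V, ¬ (ValidPlay G (l ++ [m]) ∧ FollowsAt σ 1 (l ++ [m]))) →
    l.length % 2 = 0

/-- For every even `n ≥ 3`, the prism graph `Cₙ □ K₂` has an involutive automorphism
with no fixed edges, and hence is P2-win in Trail Trap. -/
theorem mirror_P2Win {V : Type*} [Inhabited V] {G : SimpleGraph V} (φ : G ≃g G)
    (hinv : ∀ v, φ (φ v) = v)
    (hff : ∀ u v, G.Adj u v → s(φ u, φ v) ≠ s(u, v)) : P2Win G := by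
  classical
  set f : V × V → V × V := fun m => (φ m.1, φ m.2) with hf
  refine ⟨fun l => (l.getLast?.map f).getD default, fun l hv hfol hstuck => ?_⟩
  by_contra hodd
  have hodd : l.length % 2 = 1 := by omega
  set k := l.length / 2 with hk
  have hlen : l.length = 2 * k + 1 := by omega
  obtain ⟨hadj, hnd, htr⟩ := hv
  have hinv2 : ∀ e : Sym2 V, Sym2.map φ (Sym2.map φ e) = e := by
    intro e
    induction e using Sym2.ind with
    | _ x y => simp [hinv]
  have hEmap : ∀ x : V × V, s((f x).1, (f x).2) = Sym2.map φ s(x.1, x.2) := fun x => rfl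
  -- edge injectivity from Nodup
  have hndE : ∀ (i j : ℕ) (hi : i < l.length) (hj : j < l.length),
      s((l[i]'hi).1, (l[i]'hi).2) = s((l[j]'hj).1, (l[j]'hj).2) → i = j := by
    intro i j hi hj hij
    have hinj := List.nodup_iff_injective_get.1 hnd
    have := hinj (a₁ := ⟨i, by simpa using hi⟩) (a₂ := ⟨j, by simpa using hj⟩) (by
      simp only [List.get_eq_getElem, List.getElem_map]
      exact hij)
    simpa using congrArg Fin.val this
  -- the pairing: odd moves mirror the preceding even moves
  have hpair : ∀ (j : ℕ) (h : 2 * j + 1 < l.length),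
      l[2 * j + 1]'h = f (l[2 * j]'(by omega)) := by
    intro j h
    have := hfol (2 * j + 1) h (by omega)
    simp only [List.get_eq_getElem] at this
    rw [this]
    have h1 : (l.take (2 * j + 1)).getLast? = some (l[2 * j]'(by omega)) := by
      rw [List.getLast?_eq_getElem?]
      have hlen' : (l.take (2 * j + 1)).length = 2 * j + 1 := by
        rw [List.length_take]; omega
      rw [hlen']
      simp only [Nat.add_sub_cancel]
      rw [List.getElem?_take, if_pos (by omega)]
      rw [List.getElem?_eq_getElem (by omega)]
    rw [h1]
    rfl
  set a : V × V := l[2 * k]'(by omega) with ha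
  have hlast : l.getLast? = some a := by
    rw [List.getLast?_eq_getElem?, hlen]
    simp only [Nat.add_sub_cancel]
    rw [List.getElem?_eq_getElem (by omega)]
  set m : V × V := f a with hm
  have hσl : (((l.getLast?).map f).getD default) = m := by rw [hlast]; rfl
  apply hstuck m
  have hadj' : G.Adj a.1 a.2 := hadj a (l.getElem_mem _)
  constructor
  · refine ⟨?_, ?_, ?_⟩
    · intro m' hm'
      rcases List.mem_append.1 hm' with h | h
      · exact hadj m' h
      · simp only [List.mem_singleton] at h
        subst h
        exact φ.map_adj_iff.2 hadj'
    · rw [List.map_append, List.nodup_append]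
      refine ⟨hnd, List.nodup_singleton _, ?_⟩
      intro e he b hb he'
      simp only [List.map_cons, List.map_nil, List.mem_singleton] at hb
      subst hb
      subst he'
      rw [List.mem_map] at he
      obtain ⟨x, hx, hex⟩ := he
      obtain ⟨i, hi, hxi⟩ := List.mem_iff_getElem.1 hx
      subst hxi
      have hex' : s((l[i]'hi).1, (l[i]'hi).2) = s(m.1, m.2) := hex
      have key : s((l[i]'hi).1, (l[i]'hi).2) = Sym2.map φ s(a.1, a.2) := by
        rw [hex', hm]; exact hEmap a
      rcases Nat.even_or_odd i with ⟨j, hj⟩ | ⟨j, hj⟩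
      · have hj' : i = 2 * j := by omega
        subst hj'
        by_cases hjk : j = k
        · subst hjk
          exact hff a.1 a.2 hadj' key.symm
        · have hjlt : 2 * j + 1 < l.length := by omega
          have h2 : s((l[2*j+1]'hjlt).1, (l[2*j+1]'hjlt).2) =
              s((l[2*k]'(by omega)).1, (l[2*k]'(by omega)).2) := by
            rw [hpair j hjlt, hEmap, key, hinv2]
          have := hndE _ _ _ _ h2
          omega
      · have hj' : i = 2 * j + 1 := by omega
        subst hj'
        have key2 : s((l[2*j]'(by omega)).1, (l[2*j]'(by omega)).2) = s(a.1, a.2) := by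
          have := key
          rw [hpair j hi, hEmap] at this
          have := congrArg (Sym2.map φ) this
          rwa [hinv2, hinv2] at this
        have := hndE _ _ (by omega) (by omega) key2
        omega
    · intro i h
      have h' : i + 2 < l.length + 1 := by simpa using h
      simp only [List.get_eq_getElem, List.getElem_append]
      by_cases h2 : i + 2 < l.length
      · rw [dif_pos h2, dif_pos (by omega : i < l.length)]
        have := htr i h2
        simpa using this
      · have hi2 : i + 2 = l.length := by omega
        rw [dif_neg (by omega), dif_pos (by omega : i < l.length)]
        simp only [show i + 2 - l.length = 0 from by omega, List.getElem_cons_zero]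
        have hk1 : 1 ≤ k := by omega
        have hieq' : i = 2 * (k - 1) + 1 := by omega
        subst hieq'
        have htr' := htr (2 * (k - 1)) (by omega)
        simp only [List.get_eq_getElem,
          show 2 * (k - 1) + 2 = 2 * k from by omega] at htr'
        rw [hpair (k - 1) (by omega)]
        show φ a.1 = φ ((l[2 * (k - 1)]'(by omega)).2)
        rw [← htr']
  · intro i h hiodd
    have h' : i < l.length + 1 := by simpa using h
    simp only [List.get_eq_getElem, List.getElem_append]
    by_cases hil : i < l.length
    · rw [dif_pos hil]
      have := hfol i hil hiodd
      simp only [List.get_eq_getElem] at this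
      have htake : (l ++ [m]).take i = l.take i :=
        List.take_eq_left_iff.2 (Or.inr (by omega))
      rw [this, htake]
    · have hil' : i = l.length := by omega
      rw [dif_neg (by omega)]
      simp only [show i - l.length = 0 from by omega, List.getElem_cons_zero]
      rw [hil', List.take_left]
      exact hσl.symm

theorem prism_auto (n : ℕ) (h3 : 3 ≤ n) (he : Even n) :
    ∃ φ : (cycleGraph n □ (⊤ : SimpleGraph (Fin 2))) ≃g
        (cycleGraph n □ (⊤ : SimpleGraph (Fin 2))),
      (∀ v, φ (φ v) = v) ∧
      ∀ u v, (cycleGraph n □ (⊤ : SimpleGraph (Fin 2))).Adj u v →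
        s(φ u, φ v) ≠ s(u, v) := by
  haveI : NeZero n := ⟨by omega⟩
  obtain ⟨t, ht⟩ := he
  set c : Fin n := ⟨n / 2, by omega⟩ with hc
  have hcval : (c : ℕ) = n / 2 := rfl
  set f : Fin n × Fin 2 → Fin n × Fin 2 := fun p => (p.1 + c, p.2 + 1) with hf
  have hfin2 : ∀ x : Fin 2, x + 1 + 1 = x := by decide
  have hfin2' : ∀ x : Fin 2, x + 1 ≠ x := by decide
  have hcc : c + c = 0 := by
    apply Fin.ext
    simp only [Fin.add_def, Fin.val_mk, hcval, Fin.val_zero]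
    have key : n / 2 + n / 2 = n := by omega
    rw [key, Nat.mod_self]
  have hinvol : Function.Involutive f := by
    intro p
    have h1 : (p.1 + c) + c = p.1 := by rw [add_assoc, hcc, add_zero]
    show ((p.1 + c) + c, (p.2 + 1) + 1) = p
    rw [h1, hfin2]
  have hadjmap : ∀ u v, (cycleGraph n □ (⊤ : SimpleGraph (Fin 2))).Adj (f u) (f v) ↔
      (cycleGraph n □ (⊤ : SimpleGraph (Fin 2))).Adj u v := by
    intro u v
    simp only [boxProd_adj, hf, top_adj, cycleGraph_adj']
    constructor
    · rintro (⟨hcyc, heq⟩ | ⟨hne, heq⟩)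
      · left
        refine ⟨?_, by simpa using add_right_cancel heq⟩
        simpa [add_sub_add_right_eq_sub] using hcyc
      · right
        refine ⟨fun hh => hne (by rw [hh]), add_right_cancel heq⟩
    · rintro (⟨hcyc, heq⟩ | ⟨hne, heq⟩)
      · left
        refine ⟨?_, by rw [heq]⟩
        simpa [add_sub_add_right_eq_sub] using hcyc
      · right
        exact ⟨fun hh => hne (add_right_cancel hh), by rw [heq]⟩
  have hnofix : ∀ p, f p ≠ p := by
    intro p hp
    exact hfin2' p.2 (congrArg Prod.snd hp)
  refine ⟨⟨hinvol.toPerm, hadjmap _ _⟩, fun v => hinvol v, ?_⟩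
  intro u v hadj he'
  rw [Sym2.eq_iff] at he'
  rcases he' with ⟨h1, _⟩ | ⟨h1, h2⟩
  · exact hnofix u h1
  · have h1' : f u = v := h1
    have hsnd : u.2 ≠ v.2 := by
      intro hh
      apply hfin2' u.2
      have := congrArg Prod.snd h1'
      simp only [hf] at this
      rw [this, hh]
    rw [boxProd_adj] at hadj
    rcases hadj with ⟨_, heq⟩ | ⟨_, heq⟩
    · exact hsnd heq
    · have hfst : u.1 + c = v.1 := congrArg Prod.fst h1'
      rw [← heq] at hfst
      have hc0 : c = 0 := by
        have := hfst
        rwa [add_eq_left] at this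
      have := congrArg Fin.val hc0
      rw [hcval, Fin.val_zero] at this
      omega

theorem stmt_9 (n : ℕ) (h3 : 3 ≤ n) (he : Even n) :
    (∃ φ : (cycleGraph n □ (⊤ : SimpleGraph (Fin 2))) ≃g
        (cycleGraph n □ (⊤ : SimpleGraph (Fin 2))),
      (∀ v, φ (φ v) = v) ∧
      ∀ u v, (cycleGraph n □ (⊤ : SimpleGraph (Fin 2))).Adj u v →
        s(φ u, φ v) ≠ s(u, v)) ∧
    P2Win (cycleGraph n □ (⊤ : SimpleGraph (Fin 2))) := by
  haveI : NeZero n := ⟨by omega⟩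
  haveI : Inhabited (Fin n × Fin 2) := ⟨(⟨0, by omega⟩, 0)⟩
  obtain ⟨φ, hinv, hff⟩ := prism_auto n h3 he
  exact ⟨⟨φ, hinv, hff⟩, mirror_P2Win φ hinv hff⟩
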